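/- Let d ≥ 1, let P : M_d → M_d be a completely positive linear map, and let t ↦ B_t be a continuous family of completely positive linear maps on M_d. Let t ↦ V_t be the continuous solution of the modified non-Markovian master equation dV_t/dt = P V_t + ∫₀ᵗ B_{t−s} V_s ds with V_0 = id; equivalently, V_t = e^{tP} + ∫₀ᵗ ∫₀^{t−u} e^{(t−u−s)P} B_u V_s ds du. Then V_t is completely positive for every t ≥ 0. -/

import Mathlib

open scoped ComplexOrder

noncomputable instance (d : ℕ) : NormedAddCommGroup (Matrix (Fin d) (Fin d) ℂ) :=
  Matrix.frobeniusNormedAddCommGroup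

noncomputable instance (d : ℕ) : NormedSpace ℂ (Matrix (Fin d) (Fin d) ℂ) :=
  Matrix.frobeniusNormedSpace

noncomputable instance (d : ℕ) :
    NormedAddCommGroup (Matrix (Fin d) (Fin d) ℂ →L[ℂ] Matrix (Fin d) (Fin d) ℂ) :=
  ContinuousLinearMap.toNormedAddCommGroup

noncomputable instance (d : ℕ) :
    NormedSpace ℂ (Matrix (Fin d) (Fin d) ℂ →L[ℂ] Matrix (Fin d) (Fin d) ℂ) :=
  ContinuousLinearMap.toNormedSpace

instance (d : ℕ) :
    ContinuousSMul ℝ (Matrix (Fin d) (Fin d) ℂ →L[ℂ] Matrix (Fin d) (Fin d) ℂ) :=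
  @IsBoundedSMul.continuousSMul _ _ _ _ _ _ _ NormedSpace.toIsBoundedSMul

/-- A linear map `Φ` on the algebra `M_d` of `d × d` complex matrices is completely positive
if for every `n ≥ 1` the map `Φ ⊗ id` on `M_d ⊗ M_n` (realized on matrices indexed by
`Fin d × Fin n`) maps positive semidefinite matrices to positive semidefinite matrices. -/
def IsCompletelyPositive {d : ℕ}
    (Φ : Matrix (Fin d) (Fin d) ℂ →L[ℂ] Matrix (Fin d) (Fin d) ℂ) : Prop :=
  ∀ n : ℕ, 0 < n → ∀ M : Matrix (Fin d × Fin n) (Fin d × Fin n) ℂ, M.PosSemidef →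
    Matrix.PosSemidef (Matrix.of fun p q : Fin d × Fin n =>
      Φ (Matrix.of fun i j => M (i, p.2) (j, q.2)) p.1 q.1)

namespace CPAux

open Metric MeasureTheory Set

/-! ### Positive semidefinite matrices: stability facts -/

lemma psd_smul {ι : Type*} [Fintype ι] {A : Matrix ι ι ℂ} (hA : A.PosSemidef) {r : ℝ} (hr : 0 ≤ r) :
    (r • A).PosSemidef := by
  refine Matrix.PosSemidef.of_dotProduct_mulVec_nonneg ?_ (fun x => ?_)
  · show (r • A).conjTranspose = r • A
    rw [Matrix.conjTranspose_smul, star_trivial, hA.1]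
  · have h0 := hA.dotProduct_mulVec_nonneg x
    rw [Matrix.smul_mulVec, dotProduct_smul]
    rw [Complex.nonneg_iff] at h0 ⊢
    constructor
    · simpa using mul_nonneg hr h0.1
    · simp [← h0.2]

lemma isClosed_psd {ι : Type*} [Fintype ι] : IsClosed {A : Matrix ι ι ℂ | A.PosSemidef} := by
  have h1 : IsClosed {A : Matrix ι ι ℂ | A.IsHermitian} := by
    have : Continuous fun A : Matrix ι ι ℂ => A.conjTranspose :=
      continuous_id.matrix_conjTranspose
    exact isClosed_eq this continuous_id
  have h2 : ∀ x : ι → ℂ, IsClosed {A : Matrix ι ι ℂ | 0 ≤ dotProduct (star x) (A.mulVec x)} := by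
    intro x
    have hc : Continuous fun A : Matrix ι ι ℂ => dotProduct (star x) (A.mulVec x) := by
      apply continuous_finset_sum
      intro i _
      fun_prop
    have hcl : IsClosed {z : ℂ | 0 ≤ z} := by
      have : {z : ℂ | 0 ≤ z} = Complex.re ⁻¹' (Set.Ici 0) ∩ Complex.im ⁻¹' {0} := by
        ext z; simp [Complex.nonneg_iff, eq_comm]
      rw [this]
      exact (isClosed_Ici.preimage Complex.continuous_re).inter
        (isClosed_singleton.preimage Complex.continuous_im)
    exact hcl.preimage hc
  have : {A : Matrix ι ι ℂ | A.PosSemidef}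
      = {A : Matrix ι ι ℂ | A.IsHermitian} ∩ ⋂ x : ι → ℂ,
        {A : Matrix ι ι ℂ | 0 ≤ dotProduct (star x) (A.mulVec x)} := by
    ext A
    simp only [Set.mem_setOf_eq, Set.mem_inter_iff, Set.mem_iInter]
    exact ⟨fun h => ⟨h.1, h.dotProduct_mulVec_nonneg⟩, fun h => .of_dotProduct_mulVec_nonneg h.1 h.2⟩
  rw [this]
  exact h1.inter (isClosed_iInter h2)

variable {d : ℕ}

/-! ### The amplification map and the cone of completely positive maps -/

/-- Amplification of `Φ` against the `n`-indexed blocks of `M`. -/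
noncomputable def amp (n : ℕ) (M : Matrix (Fin d × Fin n) (Fin d × Fin n) ℂ)
    (Φ : Matrix (Fin d) (Fin d) ℂ →L[ℂ] Matrix (Fin d) (Fin d) ℂ) :
    Matrix (Fin d × Fin n) (Fin d × Fin n) ℂ :=
  Matrix.of fun p q : Fin d × Fin n => Φ (Matrix.of fun i j => M (i, p.2) (j, q.2)) p.1 q.1

lemma isCP_iff (Φ : Matrix (Fin d) (Fin d) ℂ →L[ℂ] Matrix (Fin d) (Fin d) ℂ) :
    IsCompletelyPositive Φ ↔ ∀ n, 0 < n → ∀ M : Matrix (Fin d × Fin n) (Fin d × Fin n) ℂ,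
      M.PosSemidef → (amp n M Φ).PosSemidef := Iff.rfl

/-- The set of completely positive maps. -/
def cpSet (d : ℕ) : Set (Matrix (Fin d) (Fin d) ℂ →L[ℂ] Matrix (Fin d) (Fin d) ℂ) :=
  {Φ | IsCompletelyPositive Φ}

lemma amp_add (n : ℕ) (M : Matrix (Fin d × Fin n) (Fin d × Fin n) ℂ)
    (Φ Ψ : Matrix (Fin d) (Fin d) ℂ →L[ℂ] Matrix (Fin d) (Fin d) ℂ) :
    amp n M (Φ + Ψ) = amp n M Φ + amp n M Ψ := by
  ext p q; simp [amp]

lemma amp_smul (n : ℕ) (M : Matrix (Fin d × Fin n) (Fin d × Fin n) ℂ) (r : ℝ)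
    (Φ : Matrix (Fin d) (Fin d) ℂ →L[ℂ] Matrix (Fin d) (Fin d) ℂ) :
    amp n M (r • Φ) = r • amp n M Φ := by
  ext p q; simp [amp]

lemma amp_comp (n : ℕ) (M : Matrix (Fin d × Fin n) (Fin d × Fin n) ℂ)
    (Φ Ψ : Matrix (Fin d) (Fin d) ℂ →L[ℂ] Matrix (Fin d) (Fin d) ℂ) :
    amp n M (Φ.comp Ψ) = amp n (amp n M Ψ) Φ := rfl

lemma amp_id (n : ℕ) (M : Matrix (Fin d × Fin n) (Fin d × Fin n) ℂ) :
    amp n M (ContinuousLinearMap.id ℂ (Matrix (Fin d) (Fin d) ℂ)) = M := by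
  ext p q; simp [amp]

lemma cp_zero : (0 : Matrix (Fin d) (Fin d) ℂ →L[ℂ] Matrix (Fin d) (Fin d) ℂ) ∈ cpSet d := by
  intro n hn M hM
  show (amp n M _).PosSemidef
  have : amp n M (0 : Matrix (Fin d) (Fin d) ℂ →L[ℂ] Matrix (Fin d) (Fin d) ℂ) = 0 := by
    ext p q; simp [amp]
  rw [this]
  exact Matrix.PosSemidef.zero

lemma cp_id : (ContinuousLinearMap.id ℂ (Matrix (Fin d) (Fin d) ℂ)) ∈ cpSet d := by
  intro n hn M hM
  show (amp n M _).PosSemidef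
  rw [amp_id]; exact hM

lemma cp_add {Φ Ψ : Matrix (Fin d) (Fin d) ℂ →L[ℂ] Matrix (Fin d) (Fin d) ℂ}
    (hΦ : Φ ∈ cpSet d) (hΨ : Ψ ∈ cpSet d) : Φ + Ψ ∈ cpSet d := by
  intro n hn M hM
  show (amp n M (Φ + Ψ)).PosSemidef
  rw [amp_add]
  exact (hΦ n hn M hM).add (hΨ n hn M hM)

lemma cp_smul {Φ : Matrix (Fin d) (Fin d) ℂ →L[ℂ] Matrix (Fin d) (Fin d) ℂ}
    (hΦ : Φ ∈ cpSet d) {r : ℝ} (hr : 0 ≤ r) : r • Φ ∈ cpSet d := by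
  intro n hn M hM
  show (amp n M (r • Φ)).PosSemidef
  rw [amp_smul]
  exact psd_smul (hΦ n hn M hM) hr

lemma cp_comp {Φ Ψ : Matrix (Fin d) (Fin d) ℂ →L[ℂ] Matrix (Fin d) (Fin d) ℂ}
    (hΦ : Φ ∈ cpSet d) (hΨ : Ψ ∈ cpSet d) : Φ.comp Ψ ∈ cpSet d := by
  intro n hn M hM
  show (amp n M (Φ.comp Ψ)).PosSemidef
  rw [amp_comp]
  exact hΦ n hn _ (hΨ n hn M hM)

lemma continuous_amp (n : ℕ) (M : Matrix (Fin d × Fin n) (Fin d × Fin n) ℂ) :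
    Continuous fun Φ : Matrix (Fin d) (Fin d) ℂ →L[ℂ] Matrix (Fin d) (Fin d) ℂ => amp n M Φ := by
  apply continuous_matrix
  intro p q
  have h1 : Continuous fun Φ : Matrix (Fin d) (Fin d) ℂ →L[ℂ] Matrix (Fin d) (Fin d) ℂ =>
      Φ (Matrix.of fun i j => M (i, p.2) (j, q.2)) :=
    (ContinuousLinearMap.apply ℂ (Matrix (Fin d) (Fin d) ℂ)
      (Matrix.of fun i j => M (i, p.2) (j, q.2))).continuous
  have h2 : Continuous fun X : Matrix (Fin d) (Fin d) ℂ => X p.1 q.1 :=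
    LinearMap.continuous_of_finiteDimensional
      ((LinearMap.proj q.1).comp (LinearMap.proj p.1 :
          Matrix (Fin d) (Fin d) ℂ →ₗ[ℂ] (Fin d → ℂ)))
  exact h2.comp h1

lemma isClosed_cpSet : IsClosed (cpSet d) := by
  have : cpSet d = ⋂ (n : ℕ) (_ : 0 < n) (M : Matrix (Fin d × Fin n) (Fin d × Fin n) ℂ)
      (_ : M.PosSemidef), (amp n M) ⁻¹' {A | A.PosSemidef} := by
    ext Φ
    simp only [cpSet, Set.mem_setOf_eq, Set.mem_iInter, Set.mem_preimage, isCP_iff]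
  rw [this]
  exact isClosed_iInter fun n => isClosed_iInter fun _ => isClosed_iInter fun M =>
    isClosed_iInter fun _ => isClosed_psd.preimage (continuous_amp n M)

lemma convex_cpSet : Convex ℝ (cpSet d) := by
  intro x hx y hy a b ha hb hab
  exact cp_add (cp_smul hx ha) (cp_smul hy hb)

lemma nonempty_cpSet : (cpSet d).Nonempty := ⟨0, cp_zero⟩

end CPAux

section MetricAux
set_option linter.unusedSectionVars false

open Metric MeasureTheory Set

variable {F : Type*} [NormedAddCommGroup F] [NormedSpace ℝ F] [ProperSpace F]
variable {K : Set F}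

lemma infDist_add_le' (hKcl : IsClosed K) (hne : K.Nonempty)
    (hadd : ∀ x ∈ K, ∀ y ∈ K, x + y ∈ K) (a b : F) :
    infDist (a + b) K ≤ infDist a K + infDist b K := by
  obtain ⟨ya, hya, h1⟩ := hKcl.exists_infDist_eq_dist hne a
  obtain ⟨yb, hyb, h2⟩ := hKcl.exists_infDist_eq_dist hne b
  calc infDist (a + b) K ≤ dist (a + b) (ya + yb) := infDist_le_dist_of_mem (hadd _ hya _ hyb)
    _ ≤ dist a ya + dist b yb := by
        rw [dist_eq_norm, dist_eq_norm, dist_eq_norm]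
        have h : a + b - (ya + yb) = (a - ya) + (b - yb) := by abel
        rw [h]; exact norm_add_le _ _
    _ = infDist a K + infDist b K := by rw [h1, h2]

lemma infDist_smul_le' (hKcl : IsClosed K) (hne : K.Nonempty)
    (hsmul : ∀ (r : ℝ), 0 ≤ r → ∀ x ∈ K, r • x ∈ K) {r : ℝ} (hr : 0 ≤ r) (a : F) :
    infDist (r • a) K ≤ r * infDist a K := by
  obtain ⟨y, hy, h1⟩ := hKcl.exists_infDist_eq_dist hne a
  calc infDist (r • a) K ≤ dist (r • a) (r • y) := infDist_le_dist_of_mem (hsmul r hr y hy)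
    _ = r * dist a y := by
        rw [dist_eq_norm, dist_eq_norm, ← smul_sub, norm_smul, Real.norm_eq_abs,
          abs_of_nonneg hr]
    _ = r * infDist a K := by rw [h1]

lemma dist_smul_nonneg' {r : ℝ} (hr : 0 ≤ r) (a b : F) :
    dist (r • a) (r • b) = r * dist a b := by
  rw [dist_eq_norm, ← smul_sub, norm_smul_of_nonneg hr, dist_eq_norm]

lemma convexOn_infDist' (hconv : Convex ℝ K) (hKcl : IsClosed K) (hne : K.Nonempty) :
    ConvexOn ℝ Set.univ (fun x : F => infDist x K) := by
  refine ⟨convex_univ, fun x _ y _ a b ha hb hab => ?_⟩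
  obtain ⟨px, hpx, h1⟩ := hKcl.exists_infDist_eq_dist hne x
  obtain ⟨py, hpy, h2⟩ := hKcl.exists_infDist_eq_dist hne y
  calc infDist (a • x + b • y) K ≤ dist (a • x + b • y) (a • px + b • py) :=
      infDist_le_dist_of_mem (hconv hpx hpy ha hb hab)
    _ ≤ a * dist x px + b * dist y py := by
        rw [dist_eq_norm, dist_eq_norm, dist_eq_norm]
        have h : a • x + b • y - (a • px + b • py) = a • (x - px) + b • (y - py) := by
          rw [smul_sub, smul_sub]; abel
        rw [h]
        refine (norm_add_le _ _).trans ?_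
        rw [norm_smul, norm_smul, Real.norm_eq_abs, Real.norm_eq_abs,
          abs_of_nonneg ha, abs_of_nonneg hb]
    _ = a * infDist x K + b * infDist y K := by rw [h1, h2]

lemma infDist_intervalIntegral_le (hKcl : IsClosed K) (hne : K.Nonempty) (hconv : Convex ℝ K)
    (hsmul : ∀ (r : ℝ), 0 ≤ r → ∀ x ∈ K, r • x ∈ K)
    {T : ℝ} (hT : 0 < T) {f : ℝ → F} (hf : ContinuousOn f (Set.Icc 0 T)) :
    infDist (∫ s in (0:ℝ)..T, f s) K ≤ ∫ s in (0:ℝ)..T, infDist (f s) K := by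
  set μ : Measure ℝ := volume.restrict (Set.Ioc (0:ℝ) T) with hμ
  haveI : IsFiniteMeasure μ := ⟨by
    rw [hμ, Measure.restrict_apply_univ, Real.volume_Ioc]
    exact ENNReal.ofReal_lt_top⟩
  haveI : NeZero μ := ⟨fun h => by
    have h2 : μ Set.univ = 0 := by rw [h]; simp
    rw [hμ, Measure.restrict_apply_univ, Real.volume_Ioc, ENNReal.ofReal_eq_zero] at h2
    linarith⟩
  have hfi : Integrable f μ :=
    (hf.integrableOn_Icc).mono_set Set.Ioc_subset_Icc_self
  have hgf : ContinuousOn (fun s => infDist (f s) K) (Set.Icc 0 T) :=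
    (continuous_infDist_pt K).comp_continuousOn hf
  have hgi : Integrable (fun s => infDist (f s) K) μ :=
    (hgf.integrableOn_Icc).mono_set Set.Ioc_subset_Icc_self
  have hμuniv : (μ Set.univ).toReal = T := by
    rw [hμ, Measure.restrict_apply_univ, Real.volume_Ioc, sub_zero, ENNReal.toReal_ofReal hT.le]
  have key := (convexOn_infDist' hconv hKcl hne).map_average_le
    ((continuous_infDist_pt K).continuousOn) isClosed_univ
    (Filter.Eventually.of_forall fun _ => Set.mem_univ _) hfi
    (by exact hgi)
  have havg : ⨍ s, f s ∂μ = T⁻¹ • ∫ s, f s ∂μ := by rw [average_eq, measureReal_def, hμuniv]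
  have hint : ∫ s in (0:ℝ)..T, f s = T • ⨍ s, f s ∂μ := by
    rw [havg, smul_smul, mul_inv_cancel₀ hT.ne', one_smul,
      intervalIntegral.integral_of_le hT.le]
  have havg2 : (⨍ s, infDist (f s) K ∂μ) = T⁻¹ * ∫ s, infDist (f s) K ∂μ := by
    rw [average_eq, measureReal_def, hμuniv, smul_eq_mul]
  calc infDist (∫ s in (0:ℝ)..T, f s) K = infDist (T • ⨍ s, f s ∂μ) K := by rw [hint]
    _ ≤ T * infDist (⨍ s, f s ∂μ) K := infDist_smul_le' hKcl hne hsmul hT.le _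
    _ ≤ T * ⨍ s, infDist (f s) K ∂μ := by
        refine mul_le_mul_of_nonneg_left ?_ hT.le
        exact key
    _ = ∫ s, infDist (f s) K ∂μ := by
        rw [havg2, ← mul_assoc, mul_inv_cancel₀ hT.ne', one_mul]
    _ = ∫ s in (0:ℝ)..T, infDist (f s) K := by
        rw [intervalIntegral.integral_of_le hT.le]

end MetricAux

open Metric MeasureTheory CPAux

set_option maxHeartbeats 1600000
set_option synthInstance.maxHeartbeats 800000

/-- The solution of the modified non-Markovian master equation
`dV_t/dt = P V_t + ∫₀ᵗ B_{t−s} V_s ds`, `V_0 = id`, with `P` and all `B_t` completely positive,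
is completely positive for every `t ≥ 0`. -/
theorem modified_nonMarkovian_completelyPositive
    {d : ℕ} (hd : 1 ≤ d)
    (P : Matrix (Fin d) (Fin d) ℂ →L[ℂ] Matrix (Fin d) (Fin d) ℂ)
    (hP : IsCompletelyPositive P)
    (B : ℝ → (Matrix (Fin d) (Fin d) ℂ →L[ℂ] Matrix (Fin d) (Fin d) ℂ))
    (hBcont : ContinuousOn B (Set.Ici 0))
    (hBcp : ∀ t, 0 ≤ t → IsCompletelyPositive (B t))
    (V : ℝ → (Matrix (Fin d) (Fin d) ℂ →L[ℂ] Matrix (Fin d) (Fin d) ℂ))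
    (hVcont : ContinuousOn V (Set.Ici 0))
    (hV0 : V 0 = ContinuousLinearMap.id ℂ _)
    (hVeq : ∀ t ∈ Set.Ici (0 : ℝ), HasDerivWithinAt V
      (P.comp (V t) + ∫ s in (0 : ℝ)..t, (B (t - s)).comp (V s)) (Set.Ici 0) t) :
    ∀ t, 0 ≤ t → IsCompletelyPositive (V t) := by
  intro T hT
  haveI : ProperSpace (Matrix (Fin d) (Fin d) ℂ →L[ℂ] Matrix (Fin d) (Fin d) ℂ) :=
    by
      haveI : FiniteDimensional ℂ (Matrix (Fin d) (Fin d) ℂ →L[ℂ] Matrix (Fin d) (Fin d) ℂ) :=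
        Module.Finite.of_injective (ContinuousLinearMap.coeLM ℂ) ContinuousLinearMap.coe_injective
      exact @FiniteDimensional.proper ℂ _ _ _ _ _ this
  set K : Set (Matrix (Fin d) (Fin d) ℂ →L[ℂ] Matrix (Fin d) (Fin d) ℂ) := cpSet d with hKdef
  have hKcl : IsClosed K := isClosed_cpSet
  have hne : K.Nonempty := nonempty_cpSet
  have hconv : Convex ℝ K := convex_cpSet
  have hadd : ∀ x ∈ K, ∀ y ∈ K, x + y ∈ K := fun x hx y hy => cp_add hx hy
  have hsmul : ∀ (r : ℝ), 0 ≤ r → ∀ x ∈ K, r • x ∈ K := fun r hr x hx => cp_smul hx hr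
  set g : ℝ → ℝ := fun s => infDist (V s) K with hgdef
  have hgnonneg : ∀ s, 0 ≤ g s := fun s => infDist_nonneg
  have hgcont : ContinuousOn g (Set.Ici 0) :=
    (continuous_infDist_pt K).comp_continuousOn hVcont
  have hgInt : ∀ a b : ℝ, 0 ≤ a → a ≤ b → IntervalIntegrable g volume a b := by
    intro a b ha hab
    refine (hgcont.mono ?_).intervalIntegrable
    rw [Set.uIcc_of_le hab]
    exact fun s hs => le_trans ha hs.1
  obtain ⟨MB, hMB⟩ := (isCompact_Icc (a := (0:ℝ)) (b := T)).exists_bound_of_continuousOn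
    (hBcont.mono (fun u hu => hu.1))
  have hMB0 : 0 ≤ MB := le_trans (norm_nonneg _) (hMB 0 ⟨le_refl 0, hT⟩)
  set C : ℝ := max (‖P‖ + 1) MB with hCdef
  have hC0 : 0 ≤ MB := hMB0
  set f : ℝ → ℝ := fun x => g x + ∫ s in (0:ℝ)..x, g s with hfdef
  -- continuity of f
  have hgIccInt : IntegrableOn g (Set.Icc 0 T) volume :=
    (hgcont.mono Set.Icc_subset_Ici_self).integrableOn_Icc
  have hprim : ContinuousOn (fun x => ∫ s in Set.Ioc (0:ℝ) x, g s) (Set.Icc 0 T) :=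
    intervalIntegral.continuousOn_primitive hgIccInt
  have hIcc : ContinuousOn (fun x => ∫ s in (0:ℝ)..x, g s) (Set.Icc 0 T) :=
    hprim.congr (fun x hx => intervalIntegral.integral_of_le hx.1)
  have hfcont : ContinuousOn f (Set.Icc 0 T) :=
    (hgcont.mono Set.Icc_subset_Ici_self).add hIcc
  -- key estimate
  have hkey : ∀ x, 0 ≤ x → x ≤ T →
      infDist (P.comp (V x) + ∫ s in (0:ℝ)..x, (B (x - s)).comp (V s)) K + g x ≤ C * f x := by
    intro x hx0 hxT
    have hi : infDist (P.comp (V x)) K ≤ ‖P‖ * g x := by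
      obtain ⟨y, hy, hyd⟩ := hKcl.exists_infDist_eq_dist hne (V x)
      calc infDist (P.comp (V x)) K ≤ dist (P.comp (V x)) (P.comp y) :=
          infDist_le_dist_of_mem (cp_comp hP hy)
        _ = ‖P.comp (V x - y)‖ := by
            rw [dist_eq_norm]; exact congrArg _ (ContinuousLinearMap.comp_sub _ _ _).symm
        _ ≤ ‖P‖ * ‖V x - y‖ := ContinuousLinearMap.opNorm_comp_le _ _
        _ = ‖P‖ * g x := congrArg _ ((dist_eq_norm _ _).symm.trans hyd.symm)
    have hii : infDist (∫ s in (0:ℝ)..x, (B (x - s)).comp (V s)) K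
        ≤ MB * ∫ s in (0:ℝ)..x, g s := by
      rcases eq_or_lt_of_le hx0 with h0 | h0
      · rw [← h0]
        simp [infDist_zero_of_mem (cp_zero (d := d))]
        exact (infDist_zero_of_mem (cp_zero (d := d))).le
      · have hFcont : ContinuousOn (fun s => (B (x - s)).comp (V s)) (Set.Icc 0 x) := by
          apply ContinuousOn.clm_comp
          · apply hBcont.comp (continuousOn_const.sub continuousOn_id)
            intro s hs
            exact sub_nonneg.2 hs.2
          · exact hVcont.mono (fun s hs => hs.1)
        refine (infDist_intervalIntegral_le hKcl hne hconv hsmul h0 hFcont).trans ?_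
        have hptwise : ∀ s ∈ Set.Icc (0:ℝ) x,
            infDist ((B (x - s)).comp (V s)) K ≤ MB * g s := by
          intro s hs
          obtain ⟨y, hy, hyd⟩ := hKcl.exists_infDist_eq_dist hne (V s)
          have hxs : (0:ℝ) ≤ x - s := sub_nonneg.2 hs.2
          calc infDist ((B (x - s)).comp (V s)) K
              ≤ dist ((B (x - s)).comp (V s)) ((B (x - s)).comp y) :=
                infDist_le_dist_of_mem (cp_comp (hBcp _ hxs) hy)
            _ = ‖(B (x - s)).comp (V s - y)‖ := by
                rw [dist_eq_norm]; exact congrArg _ (ContinuousLinearMap.comp_sub _ _ _).symm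
            _ ≤ ‖B (x - s)‖ * ‖V s - y‖ := ContinuousLinearMap.opNorm_comp_le _ _
            _ ≤ MB * g s := by
                have h3 : ‖B (x - s)‖ ≤ MB := hMB _ ⟨hxs, by linarith [hs.1]⟩
                have h4 : ‖V s - y‖ = g s := (dist_eq_norm _ _).symm.trans hyd.symm
                rw [h4]
                exact mul_le_mul_of_nonneg_right h3 (hgnonneg s)
        have hint1 : IntervalIntegrable (fun s => infDist ((B (x - s)).comp (V s)) K)
            volume 0 x := by
          refine (((continuous_infDist_pt K).comp_continuousOn hFcont).mono ?_).intervalIntegrable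
          rw [Set.uIcc_of_le h0.le]
        have hint2 : IntervalIntegrable (fun s => MB * g s) volume 0 x :=
          (hgInt 0 x le_rfl h0.le).const_mul MB
        calc (∫ s in (0:ℝ)..x, infDist ((B (x - s)).comp (V s)) K)
            ≤ ∫ s in (0:ℝ)..x, MB * g s :=
              intervalIntegral.integral_mono_on h0.le hint1 hint2 hptwise
          _ = MB * ∫ s in (0:ℝ)..x, g s := intervalIntegral.integral_const_mul _ _
    have hiii : infDist (P.comp (V x) + ∫ s in (0:ℝ)..x, (B (x - s)).comp (V s)) K ≤
        infDist (P.comp (V x)) K + infDist (∫ s in (0:ℝ)..x, (B (x - s)).comp (V s)) K :=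
      infDist_add_le' hKcl hne hadd (P.comp (V x))
      (∫ s in (0:ℝ)..x, (B (x - s)).comp (V s))
    have hIg : 0 ≤ ∫ s in (0:ℝ)..x, g s :=
      intervalIntegral.integral_nonneg hx0 (fun u _ => hgnonneg u)
    have hP1 : ‖P‖ + 1 ≤ C := le_max_left _ _
    have hM1 : MB ≤ C := le_max_right _ _
    have e1 : (‖P‖ + 1) * g x ≤ C * g x := mul_le_mul_of_nonneg_right hP1 (hgnonneg x)
    have e2 : MB * (∫ s in (0:ℝ)..x, g s) ≤ C * ∫ s in (0:ℝ)..x, g s :=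
      mul_le_mul_of_nonneg_right hM1 hIg
    have hCfx : C * f x = C * g x + C * ∫ s in (0:ℝ)..x, g s := by
      simp only [hfdef]; ring
    linarith [hi, hii, hiii]
  -- Gronwall
  have hf0 : f 0 ≤ 0 := by
    have : g 0 = 0 := by
      rw [hgdef]
      simp only
      rw [hV0]
      exact infDist_zero_of_mem cp_id
    simp [hfdef, this]
  have hf' : ∀ x ∈ Set.Ico (0:ℝ) T, ∀ r, C * f x < r →
      ∃ᶠ z in nhdsWithin x (Set.Ioi x), (z - x)⁻¹ * (f z - f x) < r := by
    intro x hx r hr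
    set D := P.comp (V x) + ∫ s in (0:ℝ)..x, (B (x - s)).comp (V s) with hDdef
    have hder : HasDerivWithinAt V D (Set.Ici 0) x := hVeq x hx.1
    have hDK : infDist D K + g x ≤ C * f x := hkey x hx.1 hx.2.le
    set c : ℝ := (r - C * f x) / 3 with hcdef
    have hcpos : 0 < c := by
      rw [hcdef]
      exact div_pos (sub_pos.2 hr) (by norm_num)
    have hr3 : r = 3 * c + C * f x := by rw [hcdef]; ring
    have hlo := hasDerivWithinAt_iff_isLittleO.1 hder
    have hmono : nhdsWithin x (Set.Ioi x) ≤ nhdsWithin x (Set.Ici 0) :=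
      nhdsWithin_mono x (fun z hz => le_trans hx.1 (le_of_lt hz))
    have ha' := hmono (hlo.def hcpos)
    have hgx : ContinuousWithinAt g (Set.Ici 0) x := hgcont x hx.1
    rw [Metric.continuousWithinAt_iff] at hgx
    obtain ⟨δ, hδpos, hδ⟩ := hgx c hcpos
    have hev2 : ∀ᶠ z in nhdsWithin x (Set.Ioi x), z < x + δ := by
      have hIoo : Set.Ioo x (x + δ) ∈ nhdsWithin x (Set.Ioi x) :=
        Ioo_mem_nhdsGT_of_mem ⟨le_refl x, by linarith⟩
      filter_upwards [hIoo] with z hz using hz.2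
    have hself : ∀ᶠ z in nhdsWithin x (Set.Ioi x), x < z :=
      eventually_mem_nhdsWithin
    apply Filter.Eventually.frequently
    filter_upwards [ha', hev2, hself] with z hza hzb hzc
    have hzx : 0 < z - x := sub_pos.2 hzc
    -- split f z - f x
    have h5 : (∫ s in (0:ℝ)..x, g s) + ∫ s in x..z, g s = ∫ s in (0:ℝ)..z, g s :=
      intervalIntegral.integral_add_adjacent_intervals (hgInt 0 x le_rfl hx.1)
        (hgInt x z hx.1 hzc.le)
    have hsplit : f z - f x = (g z - g x) + ∫ s in x..z, g s := by
      simp only [hfdef]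
      linarith
    -- bound (g z - g x)
    obtain ⟨yx, hyx, hyxd⟩ := hKcl.exists_infDist_eq_dist hne (V x)
    obtain ⟨k, hk, hkd⟩ := hKcl.exists_infDist_eq_dist hne D
    have hyK : yx + (z - x) • k ∈ K := hadd _ hyx _ (hsmul _ hzx.le _ hk)
    have hVzd : V z - (V x + (z - x) • D) = V z - V x - (z - x) • D := by abel
    have hgz : g z ≤ dist (V z) (V x + (z - x) • D) + g x + (z - x) * infDist D K := by
      have t1 := dist_triangle (V z) (V x + (z - x) • D) (yx + (z - x) • k)
      have t2 := dist_triangle (V x + (z - x) • D) (V x + (z - x) • k) (yx + (z - x) • k)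
      have t3 : dist (V x + (z - x) • D) (V x + (z - x) • k) = (z - x) * infDist D K := by
        rw [dist_add_left, hkd]
        exact dist_smul_nonneg' hzx.le D k
      have t4 : dist (V x + (z - x) • k) (yx + (z - x) • k) = g x := by
        rw [dist_add_right, ← hyxd]
      have t6 : g z ≤ dist (V z) (yx + (z - x) • k) := infDist_le_dist_of_mem hyK
      linarith
    have hquot1 : dist (V z) (V x + (z - x) • D) ≤ c * (z - x) := by
      rw [dist_eq_norm]; refine (le_of_eq (congrArg norm hVzd)).trans ?_
      exact hza.trans (le_of_eq (by rw [Real.norm_eq_abs, abs_of_nonneg hzx.le]))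
    -- bound the short integral
    have hint3 : ∫ s in x..z, g s ≤ (z - x) * (g x + c) := by
      have hmono2 : ∀ s ∈ Set.Icc x z, g s ≤ g x + c := by
        intro s hs
        have hs0 : s ∈ Set.Ici (0:ℝ) := le_trans hx.1 hs.1
        have hdist : dist s x < δ := by
          rw [Real.dist_eq, abs_of_nonneg (sub_nonneg.2 hs.1)]
          linarith [hs.2]
        have := hδ hs0 hdist
        rw [Real.dist_eq] at this
        have h7 := le_abs_self (g s - g x)
        linarith
      calc ∫ s in x..z, g s ≤ ∫ _s in x..z, (g x + c) :=
          intervalIntegral.integral_mono_on hzc.le (hgInt x z hx.1 hzc.le)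
            (intervalIntegrable_const) hmono2
        _ = (z - x) * (g x + c) := by
            rw [intervalIntegral.integral_const, smul_eq_mul]
    -- assemble
    have hprod : (z - x) * (infDist D K + g x) ≤ (z - x) * (C * f x) :=
      mul_le_mul_of_nonneg_left hDK hzx.le
    have hfin : f z - f x ≤ (z - x) * (2 * c + C * f x) := by
      nlinarith [hprod, hsplit, hgz, hquot1, hint3]
    rw [hr3]
    have h8 : (z - x)⁻¹ * (f z - f x) ≤ 2 * c + C * f x := by
      rw [inv_mul_le_iff₀ hzx]
      nlinarith [hfin]
    linarith
  have hbound : ∀ x ∈ Set.Ico (0:ℝ) T, C * f x ≤ C * f x + 0 := fun x _ => by simp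
  have hmain := le_gronwallBound_of_liminf_deriv_right_le (f := f) (f' := fun x => C * f x)
    (δ := 0) (K := C) (ε := 0) (a := 0) (b := T) hfcont hf' hf0 hbound
  have hfT : f T ≤ 0 := by
    simpa [gronwallBound_ε0] using hmain T (Set.mem_Icc.2 ⟨hT, le_rfl⟩)
  have hIg : 0 ≤ ∫ s in (0:ℝ)..T, g s :=
    intervalIntegral.integral_nonneg hT (fun u _ => hgnonneg u)
  have hgT : g T = 0 := by
    have h9 : g T + ∫ s in (0:ℝ)..T, g s ≤ 0 := hfT
    have := hgnonneg T
    linarith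
  exact (hKcl.mem_iff_infDist_zero hne).2 hgT
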